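/- A disjoint topological sum X = ⊕_{j∈J} X_j of spaces, each of which embeds into an Eberlein compact, itself embeds into an Eberlein compact. More precisely: if each X_j has a σ-strongly point-finite almost subbase α_j, then the family {X_j : j ∈ J} ∪ ⋃_j α_j is a σ-strongly point-finite almost subbase of X. -/

import Mathlib

/-- `A` is a zero-set of `Z`. -/
def IsZeroSetD {Z : Type*} [TopologicalSpace Z] (A : Set Z) : Prop :=
  ∃ f : C(Z, ℝ), (∀ x, f x ∈ Set.Icc (0 : ℝ) 1) ∧ A = f ⁻¹' {0}

/-- `A` is a cozero-set of `Z`. -/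
def IsCozSetD {Z : Type*} [TopologicalSpace Z] (A : Set Z) : Prop :=
  ∃ f : C(Z, ℝ), (∀ x, f x ∈ Set.Icc (0 : ℝ) 1) ∧ A = (f ⁻¹' {0})ᶜ

/-- `u` is a U-representation of `V`: `V = ⋃_{n ≥ 1} u n`, the sequence is increasing,
odd-indexed members are zero-sets and even-indexed members are cozero-sets. -/
def IsURep {Z : Type*} [TopologicalSpace Z] (u : ℕ → Set Z) (V : Set Z) : Prop :=
  V = (⋃ n, ⋃ (_ : 1 ≤ n), u n) ∧
    (∀ n, 1 ≤ n → u n ⊆ u (n + 1)) ∧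
    (∀ n, 1 ≤ n → IsZeroSetD (u (2 * n - 1))) ∧
    (∀ n, 1 ≤ n → IsCozSetD (u (2 * n)))

/-- `α` is an almost subbase of `Z`: there are U-representations `u V` of the members
`V ∈ α` such that `α ∪ {Z \ u V (2n-1) : V ∈ α, n ≥ 1}` generates the topology. -/
def IsAlmostSubbase {Z : Type*} [t : TopologicalSpace Z] (α : Set (Set Z)) : Prop :=
  ∃ u : Set Z → ℕ → Set Z, (∀ V ∈ α, IsURep (u V) V) ∧
    t = TopologicalSpace.generateFrom
      (α ∪ {W | ∃ V ∈ α, ∃ n : ℕ, 1 ≤ n ∧ W = (u V (2 * n - 1))ᶜ})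

/-- `α` is strongly point-finite. -/
def StronglyPF {Z : Type*} (α : Set (Set Z)) : Prop :=
  ∀ μ ⊆ α, μ.Countable → μ.Infinite → ∃ μ' ⊆ μ, μ'.Finite ∧ ⋂₀ μ' = ∅

/-- `α` is σ-strongly point-finite: a countable union of strongly point-finite families. -/
def SigmaStronglyPF {Z : Type*} (α : Set (Set Z)) : Prop :=
  ∃ β : ℕ → Set (Set Z), α = (⋃ n, β n) ∧ ∀ n, StronglyPF (β n)

open Set TopologicalSpace

noncomputable def sigExt {J : Type*} {X : J → Type*} [∀ j, TopologicalSpace (X j)]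
    (j : J) (f : C(X j, ℝ)) (c : ℝ) : C((Σ i, X i), ℝ) := by
  classical
  exact ⟨fun x => (Function.update (fun i => (ContinuousMap.const (X i) c)) j f x.1) x.2,
    continuous_sigma fun i => (Function.update (fun i => (ContinuousMap.const (X i) c)) j f i).continuous⟩

lemma sigExt_same {J : Type*} {X : J → Type*} [∀ j, TopologicalSpace (X j)]
    (j : J) (f : C(X j, ℝ)) (c : ℝ) (y : X j) : sigExt j f c ⟨j, y⟩ = f y := by
  classical
  simp [sigExt]

lemma sigExt_ne {J : Type*} {X : J → Type*} [∀ j, TopologicalSpace (X j)]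
    (j i : J) (f : C(X j, ℝ)) (c : ℝ) (y : X i) (h : i ≠ j) : sigExt j f c ⟨i, y⟩ = c := by
  classical
  simp [sigExt, Function.update_of_ne h]

lemma zero_image {J : Type*} {X : J → Type*} [∀ j, TopologicalSpace (X j)]
    (j : J) {A : Set (X j)} (hA : IsZeroSetD A) : IsZeroSetD (Sigma.mk j '' A) := by
  obtain ⟨f, hf, rfl⟩ := hA
  refine ⟨sigExt j f 1, ?_, ?_⟩
  · rintro ⟨i, y⟩
    by_cases h : i = j
    · subst h; rw [sigExt_same]; exact hf y
    · rw [sigExt_ne _ _ _ _ _ h]; exact ⟨zero_le_one, le_refl 1⟩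
  · ext ⟨i, y⟩
    by_cases h : i = j
    · subst h
      simp [sigma_mk_injective.mem_set_image, sigExt_same]
    · simp only [mem_image, mem_preimage, mem_singleton_iff, sigExt_ne _ _ _ _ _ h]
      constructor
      · rintro ⟨a, _, heq⟩; exact (h (congrArg Sigma.fst heq).symm).elim
      · intro h1; exact absurd h1 one_ne_zero
lemma coz_image {J : Type*} {X : J → Type*} [∀ j, TopologicalSpace (X j)]
    (j : J) {A : Set (X j)} (hA : IsCozSetD A) : IsCozSetD (Sigma.mk j '' A) := by
  obtain ⟨f, hf, rfl⟩ := hA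
  refine ⟨sigExt j f 0, ?_, ?_⟩
  · rintro ⟨i, y⟩
    by_cases h : i = j
    · subst h; rw [sigExt_same]; exact hf y
    · rw [sigExt_ne _ _ _ _ _ h]; exact ⟨le_refl 0, zero_le_one⟩
  · ext ⟨i, y⟩
    by_cases h : i = j
    · subst h
      simp [sigma_mk_injective.mem_set_image, sigExt_same]
    · simp only [mem_image, mem_compl_iff, mem_preimage, mem_singleton_iff,
        sigExt_ne _ _ _ _ _ h]
      constructor
      · rintro ⟨a, _, heq⟩; exact (h (congrArg Sigma.fst heq).symm).elim
      · intro h1; exact (h1 trivial).elim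

lemma zero_univ {Z : Type*} [TopologicalSpace Z] : IsZeroSetD (Set.univ : Set Z) :=
  ⟨ContinuousMap.const Z 0, fun _ => ⟨le_refl 0, zero_le_one⟩, by ext x; simp⟩

lemma coz_univ {Z : Type*} [TopologicalSpace Z] : IsCozSetD (Set.univ : Set Z) :=
  ⟨ContinuousMap.const Z 1, fun _ => ⟨zero_le_one, le_refl 1⟩, by ext x; simp⟩

lemma zero_empty {Z : Type*} [TopologicalSpace Z] : IsZeroSetD (∅ : Set Z) :=
  ⟨ContinuousMap.const Z 1, fun _ => ⟨zero_le_one, le_refl 1⟩, by ext x; simp⟩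

lemma coz_empty {Z : Type*} [TopologicalSpace Z] : IsCozSetD (∅ : Set Z) :=
  ⟨ContinuousMap.const Z 0, fun _ => ⟨le_refl 0, zero_le_one⟩, by ext x; simp⟩

lemma zero_range {J : Type*} {X : J → Type*} [∀ j, TopologicalSpace (X j)]
    (j : J) : IsZeroSetD (Set.range (Sigma.mk j) : Set (Σ i, X i)) := by
  have := zero_image (X := X) j (A := Set.univ) zero_univ
  rwa [Set.image_univ] at this

lemma coz_range {J : Type*} {X : J → Type*} [∀ j, TopologicalSpace (X j)]
    (j : J) : IsCozSetD (Set.range (Sigma.mk j) : Set (Σ i, X i)) := by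
  have := coz_image (X := X) j (A := Set.univ) coz_univ
  rwa [Set.image_univ] at this

lemma zero_closed {Z : Type*} [TopologicalSpace Z] {A : Set Z} (h : IsZeroSetD A) :
    IsClosed A := by
  obtain ⟨f, _, rfl⟩ := h
  exact isClosed_singleton.preimage f.continuous

lemma image_compl_sigma {J : Type*} {X : J → Type*} (j : J) (A : Set (X j)) :
    Sigma.mk j '' Aᶜ = (Sigma.mk j '' A)ᶜ ∩ Set.range (Sigma.mk j) := by
  ext ⟨i, y⟩
  by_cases h : i = j
  · subst h
    simp only [sigma_mk_injective.mem_set_image, Set.mem_inter_iff, Set.mem_compl_iff,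
      Set.mem_range]
    exact ⟨fun hy => ⟨fun hA => hy hA, y, rfl⟩, fun h => h.1⟩
  · constructor
    · rintro ⟨a, _, heq⟩; exact (h (congrArg Sigma.fst heq).symm).elim
    · rintro ⟨-, a, heq⟩; exact (h (congrArg Sigma.fst heq).symm).elim

lemma sInter_image_inj {A B : Type*} {f : A → B} (hf : Function.Injective f)
    {T : Set (Set A)} (hT : T.Nonempty) :
    ⋂₀ ((Set.image f) '' T) = f '' ⋂₀ T := by
  obtain ⟨A₀, hA₀⟩ := hT
  ext x
  constructor
  · intro h
    have h' : ∀ C ∈ T, x ∈ f '' C := fun C hC => Set.mem_sInter.mp h _ ⟨C, hC, rfl⟩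
    obtain ⟨y, hy, rfl⟩ := h' A₀ hA₀
    exact ⟨y, Set.mem_sInter.mpr fun C hC => by
      obtain ⟨z, hz, hzy⟩ := h' C hC; rwa [← hf hzy], rfl⟩
  · rintro ⟨y, hy, rfl⟩
    exact Set.mem_sInter.mpr (by
      rintro B ⟨C, hC, rfl⟩; exact ⟨y, Set.mem_sInter.mp hy C hC, rfl⟩)
lemma urep_image {J : Type*} {X : J → Type*} [∀ j, TopologicalSpace (X j)]
    (j : J) {u : ℕ → Set (X j)} {V : Set (X j)} (h : IsURep u V) :
    IsURep (fun n => Sigma.mk j '' u n) (Sigma.mk j '' V) := by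
  obtain ⟨h1, h2, h3, h4⟩ := h
  refine ⟨?_, fun n hn => Set.image_mono (h2 n hn),
    fun n hn => zero_image j (h3 n hn), fun n hn => coz_image j (h4 n hn)⟩
  rw [h1]
  simp only [Set.image_iUnion]

lemma urep_const_range {J : Type*} {X : J → Type*} [∀ j, TopologicalSpace (X j)]
    (j : J) : IsURep (fun _ => Set.range (Sigma.mk j) : ℕ → Set (Σ i, X i))
      (Set.range (Sigma.mk j)) := by
  refine ⟨?_, fun n _ => subset_rfl, fun n _ => zero_range j, fun n _ => coz_range j⟩
  ext x
  simp only [Set.mem_iUnion]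
  exact ⟨fun hx => ⟨1, le_refl 1, hx⟩, fun ⟨n, _, hx⟩ => hx⟩

lemma urep_empty {Z : Type*} [TopologicalSpace Z] :
    IsURep (fun _ => (∅ : Set Z)) ∅ := by
  refine ⟨by simp, fun n _ => subset_rfl, fun n _ => zero_empty, fun n _ => coz_empty⟩
/-- If each summand `X j` of a disjoint topological sum has a σ-strongly point-finite
almost subbase `α j`, then the family `{X j : j ∈ J} ∪ ⋃ j, α j` (transferred to the
sum) is a σ-strongly point-finite almost subbase of the sum `Σ j, X j`. -/
theorem stmt_14 {J : Type*} {X : J → Type*} [∀ j, TopologicalSpace (X j)]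
    (α : ∀ j, Set (Set (X j)))
    (hsub : ∀ j, IsAlmostSubbase (α j))
    (hspf : ∀ j, SigmaStronglyPF (α j)) :
    IsAlmostSubbase
        ({S : Set (Σ j, X j) | ∃ j, S = Set.range (Sigma.mk j)} ∪
          {S : Set (Σ j, X j) | ∃ j, ∃ V ∈ α j, S = Sigma.mk j '' V}) ∧
      SigmaStronglyPF
        ({S : Set (Σ j, X j) | ∃ j, S = Set.range (Sigma.mk j)} ∪
          {S : Set (Σ j, X j) | ∃ j, ∃ V ∈ α j, S = Sigma.mk j '' V}) := by
  classical
  choose u hu ht using hsub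
  choose β hβ hβpf using hspf
  set F : Set (Set (Σ j, X j)) :=
    ({S : Set (Σ j, X j) | ∃ j, S = Set.range (Sigma.mk j)} ∪
      {S : Set (Σ j, X j) | ∃ j, ∃ V ∈ α j, S = Sigma.mk j '' V}) with hFdef
  constructor
  · -- almost subbase
    have key : ∀ W : Set (Σ j, X j), ∃ v : ℕ → Set (Σ j, X j),
        (W ∈ F → IsURep v W) ∧
        (∀ j V, V ∈ α j → W = Sigma.mk j '' V → W ≠ ∅ →
          v = fun n => Sigma.mk j '' (u j V n)) := by
      intro W
      by_cases h1 : ∃ j, ∃ V ∈ α j, W = Sigma.mk j '' V ∧ W ≠ ∅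
      · obtain ⟨j, V, hV, hWeq, hne⟩ := h1
        refine ⟨fun n => Sigma.mk j '' (u j V n),
          fun _ => by rw [hWeq]; exact urep_image j (hu j V hV), ?_⟩
        intro j' V' hV' hW' hne'
        obtain ⟨x, hx⟩ := Set.nonempty_iff_ne_empty.mpr hne
        have hxj : x ∈ Sigma.mk j '' V := by rw [← hWeq]; exact hx
        have hxj' : x ∈ Sigma.mk j' '' V' := by rw [← hW']; exact hx
        obtain ⟨y, hy, rfl⟩ := hxj
        obtain ⟨y', hy', heq⟩ := hxj'
        have hjj : j' = j := congrArg Sigma.fst heq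
        subst hjj
        have hVV : V' = V :=
          Set.image_injective.mpr sigma_mk_injective (hW'.symm.trans hWeq)
        subst hVV
        rfl
      · by_cases h2 : W = ∅
        · subst h2
          exact ⟨fun _ => ∅, fun _ => urep_empty, fun j V hV hW hne => absurd rfl hne⟩
        · refine ⟨fun _ => W, fun hWF => ?_, ?_⟩
          · rcases hWF with ⟨j, rfl⟩ | ⟨j, V, hV, hWeq⟩
            · exact urep_const_range j
            · exact absurd ⟨j, V, hV, hWeq, h2⟩ h1
          · intro j V hV hW hne
            exact absurd ⟨j, V, hV, hW, hne⟩ h1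
    choose Uf hUrep hUuniq using key
    refine ⟨Uf, fun W hW => hUrep W hW, ?_⟩
    set S : Set (Set (Σ j, X j)) :=
      F ∪ {W | ∃ V ∈ F, ∃ n : ℕ, 1 ≤ n ∧ W = (Uf V (2 * n - 1))ᶜ} with hSdef
    apply le_antisymm
    · apply le_generateFrom
      rintro s (hs | ⟨V, hVF, n, hn, rfl⟩)
      · rcases hs with ⟨j, rfl⟩ | ⟨j, V, hV, rfl⟩
        · exact isOpen_range_sigmaMk
        · apply isOpenMap_sigmaMk
          rw [ht j]
          exact TopologicalSpace.isOpen_generateFrom_of_mem (Or.inl hV)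
      · exact (zero_closed ((hUrep V hVF).2.2.1 n hn)).isOpen_compl
    · -- generateFrom S ≤ sum topology
      have himg : ∀ (j : J) (A : Set (X j)), IsOpen A →
          TopologicalSpace.GenerateOpen S (Sigma.mk j '' A) := by
        intro j A hA
        rw [ht j] at hA
        have hA' : TopologicalSpace.GenerateOpen
            (α j ∪ {W | ∃ V ∈ α j, ∃ n : ℕ, 1 ≤ n ∧ W = (u j V (2 * n - 1))ᶜ}) A := hA
        clear hA
        induction hA' with
        | basic s hs =>
          rcases hs with hs | ⟨V, hV, n, hn, rfl⟩
          · exact .basic _ (Or.inl (Or.inr ⟨j, s, hs, rfl⟩))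
          · by_cases hne : Sigma.mk j '' V = ∅
            · have hVe : V = ∅ := by rwa [Set.image_eq_empty] at hne
              have hue : u j V (2 * n - 1) = ∅ := by
                have hsub' : u j V (2 * n - 1) ⊆ ⋃ m, ⋃ (_ : 1 ≤ m), u j V m :=
                  Set.subset_iUnion₂ (s := fun m (_ : 1 ≤ m) => u j V m) (2 * n - 1)
                    (by omega)
                rw [← (hu j V hV).1] at hsub'
                exact Set.eq_empty_of_subset_empty (hsub'.trans hVe.subset)
              rw [hue, Set.compl_empty, Set.image_univ]
              exact .basic _ (Or.inl (Or.inl ⟨j, rfl⟩))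
            · have hUW := hUuniq (Sigma.mk j '' V) j V hV rfl hne
              rw [image_compl_sigma]
              refine TopologicalSpace.GenerateOpen.inter _ _ ?_ ?_
              · refine .basic _ (Or.inr ⟨Sigma.mk j '' V, Or.inr ⟨j, V, hV, rfl⟩, n, hn, ?_⟩)
                rw [hUW]
              · exact .basic _ (Or.inl (Or.inl ⟨j, rfl⟩))
        | univ =>
          rw [Set.image_univ]
          exact .basic _ (Or.inl (Or.inl ⟨j, rfl⟩))
        | inter s t _ _ ihs iht =>
          rw [Set.image_inter sigma_mk_injective]
          exact .inter _ _ ihs iht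
        | sUnion T _ ih =>
          rw [Set.image_sUnion]
          exact .sUnion _ (by rintro B ⟨t, htT, rfl⟩; exact ih t htT)
      rw [TopologicalSpace.le_def]
      intro O hO
      have hO' : ∀ j, IsOpen (Sigma.mk j ⁻¹' O) := fun j => hO.preimage continuous_sigmaMk
      have hdec : O = ⋃₀ {B | ∃ j, B = Sigma.mk j '' (Sigma.mk j ⁻¹' O)} := by
        ext ⟨j, y⟩
        constructor
        · intro h
          exact Set.mem_sUnion.mpr ⟨_, ⟨j, rfl⟩, y, h, rfl⟩
        · rintro ⟨B, ⟨j', rfl⟩, y', hy', heq⟩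
          rw [← heq]
          exact hy'
      show TopologicalSpace.GenerateOpen S O
      rw [hdec]
      exact .sUnion _ (by rintro B ⟨j, rfl⟩; exact himg j _ (hO' j))
  · -- sigma strongly point finite
    refine ⟨fun n => Nat.casesOn n {S : Set (Σ j, X j) | ∃ j, S = Set.range (Sigma.mk j)}
        (fun m => {S : Set (Σ j, X j) | ∃ j, ∃ V ∈ β j m, S = Sigma.mk j '' V}), ?_, ?_⟩
    · ext S
      constructor
      · rintro (⟨j, rfl⟩ | ⟨j, V, hV, rfl⟩)
        · exact Set.mem_iUnion.mpr ⟨0, j, rfl⟩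
        · have hV' : V ∈ ⋃ n, β j n := by rw [← hβ j]; exact hV
          obtain ⟨m, hm⟩ := Set.mem_iUnion.mp hV'
          exact Set.mem_iUnion.mpr ⟨m + 1, j, V, hm, rfl⟩
      · intro hS
        obtain ⟨n, hn⟩ := Set.mem_iUnion.mp hS
        cases n with
        | zero => exact Or.inl hn
        | succ m =>
          obtain ⟨j, V, hV, rfl⟩ := hn
          exact Or.inr ⟨j, V, by rw [hβ j]; exact Set.mem_iUnion.mpr ⟨m, hV⟩, rfl⟩
    · intro n
      cases n with
      | zero =>
        intro μ hμsub hμc hμinf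
        obtain ⟨S1, hS1, S2, hS2, hne⟩ := hμinf.nontrivial
        obtain ⟨j1, rfl⟩ := hμsub hS1
        obtain ⟨j2, rfl⟩ := hμsub hS2
        have hj : j1 ≠ j2 := fun h => hne (by rw [h])
        refine ⟨{Set.range (Sigma.mk j1), Set.range (Sigma.mk j2)}, ?_, ?_, ?_⟩
        · intro B hB
          rcases hB with rfl | hB
          · exact hS1
          · rw [Set.mem_singleton_iff] at hB; rw [hB]; exact hS2
        · exact (Set.finite_singleton _).insert _
        · rw [Set.sInter_pair]
          apply Set.eq_empty_iff_forall_notMem.mpr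
          rintro x ⟨⟨y1, rfl⟩, y2, heq⟩
          exact hj (congrArg Sigma.fst heq).symm
      | succ m =>
        intro μ hμsub hμc hμinf
        obtain ⟨S₀, hS₀⟩ := hμinf.nonempty
        obtain ⟨j₀, V₀', hV₀', hS₀eq⟩ := hμsub hS₀
        by_cases hall : ∀ S ∈ μ, ∃ V ∈ β j₀ m, S = Sigma.mk j₀ '' V
        · obtain ⟨V₀, hV₀, hS₀eq'⟩ := hall S₀ hS₀
          have hinj : Function.Injective (Set.image (@Sigma.mk J X j₀)) :=
            fun A B h => Set.image_injective.mpr sigma_mk_injective h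
          set μs : Set (Set (X j₀)) := {V | V ∈ β j₀ m ∧ Sigma.mk j₀ '' V ∈ μ} with hμsdef
          have hμs_sub : μs ⊆ β j₀ m := fun V hV => hV.1
          have hμs_c : μs.Countable :=
            Set.Countable.mono (fun V hV => hV.2) (hμc.preimage hinj)
          have hμsups : μ ⊆ (Set.image (Sigma.mk j₀)) '' μs := by
            intro S hS
            obtain ⟨V, hV, rfl⟩ := hall S hS
            exact ⟨V, ⟨hV, hS⟩, rfl⟩
          have hμs_inf : μs.Infinite := by
            by_contra hfin
            rw [Set.not_infinite] at hfin
            exact hμinf (Set.Finite.subset (hfin.image _) hμsups)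
          obtain ⟨ν, hνsub, hνfin, hνint⟩ := hβpf j₀ m μs hμs_sub hμs_c hμs_inf
          refine ⟨(Set.image (Sigma.mk j₀)) '' (insert V₀ ν), ?_, (hνfin.insert V₀).image _, ?_⟩
          · rintro B ⟨V, hV, rfl⟩
            rcases hV with rfl | hV
            · rw [← hS₀eq']; exact hS₀
            · exact (hνsub hV).2
          · rw [sInter_image_inj sigma_mk_injective (Set.insert_nonempty _ _), Set.sInter_insert,
              hνint, Set.inter_empty, Set.image_empty]
        · push_neg at hall
          obtain ⟨S, hS, hno⟩ := hall
          obtain ⟨j, V, hV, hSeq⟩ := hμsub hS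
          have hj : j ≠ j₀ := by
            rintro rfl
            exact hno V hV hSeq
          refine ⟨{S, S₀}, ?_, (Set.finite_singleton _).insert _, ?_⟩
          · intro B hB
            rcases hB with rfl | hB
            · exact hS
            · rw [Set.mem_singleton_iff] at hB; rw [hB]; exact hS₀
          · rw [Set.sInter_pair, hSeq, hS₀eq]
            apply Set.eq_empty_iff_forall_notMem.mpr
            rintro x ⟨⟨y, hy, rfl⟩, y₀, hy₀, heq⟩
            exact hj (congrArg Sigma.fst heq).symm
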